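/- Let S : [0,∞) → ℂ satisfy ∫₀^∞ |S(v)| dv < ∞. Then for every x ∈ (0,∞), the improper integral ∫₀^∞ e^{-ixt} (∫₀^∞ e^{-vt} S(v) dv) dt converges and equals ∫₀^∞ S(v)/(ix + v) dv. -/

import Mathlib

set_option maxHeartbeats 1000000


open MeasureTheory Set Filter Complex intervalIntegral

/-- For S integrable on [0,∞) and x>0, the improper integral
∫₀^∞ e^{-ixt}(∫₀^∞ e^{-vt}S(v)dv)dt converges and equals ∫₀^∞ S(v)/(ix+v)dv. -/
theorem stmt_3 (S : ℝ → ℂ) (hS : IntegrableOn S (Ioi 0)) :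
    ∀ x : ℝ, 0 < x →
      Tendsto (fun N : ℝ => ∫ t in (0:ℝ)..N, Complex.exp (-(Complex.I * x * t)) *
          ∫ v in Ioi (0:ℝ), Complex.exp (-(v * t : ℝ)) * S v) atTop
        (nhds (∫ v in Ioi (0:ℝ), S v / (Complex.I * x + v))) := by
  intro x hx
  have hc : ∀ v : ℝ, Complex.I * (x:ℂ) + (v:ℂ) ≠ 0 := by
    intro v h
    have h2 := congrArg Complex.im h
    simp at h2
    exact hx.ne' h2
  have key : ∀ N : ℝ, 0 ≤ N →
      (∫ t in (0:ℝ)..N, Complex.exp (-(Complex.I * x * t)) *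
          ∫ v in Ioi (0:ℝ), Complex.exp (-(v * t : ℝ)) * S v)
      = ∫ v in Ioi (0:ℝ),
          S v * (1 - Complex.exp (-((Complex.I * x + v) * N))) / (Complex.I * x + v) := by
    intro N hN
    have hF : Integrable (fun p : ℝ × ℝ => Complex.exp (-((Complex.I * x + p.2) * p.1)) * S p.2)
        ((volume.restrict (Ioc 0 N)).prod (volume.restrict (Ioi 0))) := by
      have h1 : Integrable (fun p : ℝ × ℝ => (1:ℂ) * S p.2)
          ((volume.restrict (Ioc 0 N)).prod (volume.restrict (Ioi 0))) :=
        (integrable_const (1:ℂ)).mul_prod hS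
      simp only [one_mul] at h1
      refine h1.norm.mono' ((Continuous.aestronglyMeasurable (by fun_prop)).mul h1.aestronglyMeasurable) ?_
      have hmem : ∀ᵐ p : ℝ × ℝ ∂((volume.restrict (Ioc 0 N)).prod (volume.restrict (Ioi 0))),
          p ∈ (Ioc (0:ℝ) N) ×ˢ (Ioi (0:ℝ)) := by
        rw [Measure.prod_restrict]
        exact ae_restrict_mem (measurableSet_Ioc.prod measurableSet_Ioi)
      filter_upwards [hmem] with p hp
      have hp1 : 0 < p.1 := hp.1.1
      have hp2 : 0 < p.2 := hp.2
      rw [norm_mul, Complex.norm_exp]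
      have : (-((Complex.I * x + p.2) * p.1)).re = -(p.2 * p.1) := by
        simp [Complex.mul_re]
      rw [this]
      calc Real.exp (-(p.2*p.1)) * ‖S p.2‖ ≤ 1 * ‖S p.2‖ := by
            apply mul_le_mul_of_nonneg_right _ (norm_nonneg _)
            exact Real.exp_le_one_iff.2 (by nlinarith)
        _ = ‖S p.2‖ := one_mul _
    rw [intervalIntegral.integral_of_le hN]
    have step1 : ∀ t : ℝ, Complex.exp (-(Complex.I * x * t)) *
        ∫ v in Ioi (0:ℝ), Complex.exp (-(v * t : ℝ)) * S v
        = ∫ v in Ioi (0:ℝ), Complex.exp (-((Complex.I * x + v) * t)) * S v := by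
      intro t
      rw [← MeasureTheory.integral_const_mul]
      refine integral_congr_ae (.of_forall fun v => ?_)
      dsimp only
      rw [← mul_assoc, ← Complex.exp_add]
      congr 2
      push_cast
      ring
    simp only [step1]
    rw [MeasureTheory.integral_integral_swap hF]
    refine integral_congr_ae (.of_forall fun v => ?_)
    dsimp only
    rw [MeasureTheory.integral_mul_const, ← intervalIntegral.integral_of_le hN]
    have hc' : -(Complex.I * x + v) ≠ 0 := neg_ne_zero.2 (hc v)
    have heq : (fun t : ℝ => Complex.exp (-((Complex.I * x + v) * t)))
        = fun t : ℝ => Complex.exp ((-(Complex.I * x + v)) * t) := by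
      funext t; ring_nf
    rw [heq, integral_exp_mul_complex hc']
    rw [show -(Complex.I * x + v) * (N:ℂ) = -((Complex.I * x + v) * N) by ring]
    simp only [Complex.ofReal_zero, mul_zero, neg_zero, Complex.exp_zero]
    rw [div_neg]
    ring
  have lim : Tendsto (fun N : ℝ => ∫ v in Ioi (0:ℝ),
      S v * (1 - Complex.exp (-((Complex.I * x + v) * N))) / (Complex.I * x + v)) atTop
      (nhds (∫ v in Ioi (0:ℝ), S v / (Complex.I * x + v))) := by
    refine tendsto_integral_filter_of_dominated_convergence (fun v => ‖S v‖ * (2 / x))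
      ?_ ?_ (hS.norm.mul_const _) ?_
    · filter_upwards with N
      have hcont : Continuous fun v : ℝ =>
          (1 - Complex.exp (-((Complex.I * x + v) * N))) / (Complex.I * x + v) := by
        refine Continuous.div (continuous_const.sub (Complex.continuous_exp.comp ?_)) ?_ hc
        · exact ((continuous_const.add Complex.continuous_ofReal).mul continuous_const).neg
        · exact continuous_const.add Complex.continuous_ofReal
      simp only [mul_div_assoc]
      exact hS.aestronglyMeasurable.mul hcont.aestronglyMeasurable
    · filter_upwards [eventually_ge_atTop (0:ℝ)] with N hN
      filter_upwards [ae_restrict_mem measurableSet_Ioi] with v hv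
      have hre : (-((Complex.I * x + v) * N)).re = -(v * N) := by
        simp [Complex.mul_re]
      have h1 : ‖1 - Complex.exp (-((Complex.I * x + v) * N))‖ ≤ 2 := by
        calc ‖1 - Complex.exp (-((Complex.I * x + v) * N))‖
            ≤ ‖(1:ℂ)‖ + ‖Complex.exp (-((Complex.I * x + v) * N))‖ := norm_sub_le _ _
          _ = 1 + Real.exp (-(v * N)) := by
              rw [norm_one, Complex.norm_exp, hre]
          _ ≤ 1 + 1 := by
              have : Real.exp (-(v * N)) ≤ 1 := Real.exp_le_one_iff.2 (by nlinarith [(show (0:ℝ) < v from hv).le])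
              linarith
          _ = 2 := by norm_num
      have h2 : x ≤ ‖(Complex.I * x + v : ℂ)‖ := by
        have him := Complex.abs_im_le_norm (Complex.I * x + v)
        simp only [Complex.add_im, Complex.mul_im, Complex.I_re, Complex.ofReal_im,
          Complex.I_im, Complex.ofReal_re, Complex.ofReal_im] at him
        calc x = |x| := (abs_of_pos hx).symm
          _ ≤ _ := by simpa using him
      calc ‖S v * (1 - Complex.exp (-((Complex.I * x + v) * N))) / (Complex.I * x + v)‖
          = ‖S v‖ * ‖1 - Complex.exp (-((Complex.I * x + v) * N))‖ /
              ‖(Complex.I * x + v : ℂ)‖ := by rw [norm_div, norm_mul]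
        _ ≤ ‖S v‖ * 2 / x := by gcongr
        _ = ‖S v‖ * (2 / x) := by ring
    · filter_upwards [ae_restrict_mem measurableSet_Ioi] with v hv
      have hvN : Tendsto (fun N : ℝ => -(v * N)) atTop atBot :=
        tendsto_neg_atTop_atBot.comp (tendsto_id.const_mul_atTop hv)
      have he : Tendsto (fun N : ℝ => Complex.exp (-((Complex.I * x + v) * N)))
          atTop (nhds 0) := by
        rw [tendsto_zero_iff_norm_tendsto_zero]
        refine (Real.tendsto_exp_atBot.comp hvN).congr fun N => ?_
        simp only [Function.comp]
        rw [Complex.norm_exp]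
        congr 1
        simp [Complex.mul_re]
      have := (((tendsto_const_nhds (x := (1:ℂ))).sub he).const_mul (S v)).div_const
        (Complex.I * ↑x + ↑v : ℂ)
      simpa using this
  refine lim.congr' ?_
  filter_upwards [eventually_ge_atTop (0:ℝ)] with N hN using (key N hN).symm
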